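/- Let (Ω, F, P, θ) be a stationary ergodic quadruple carrying σ, τ as in the context and let p ≥ 1. Then there exists a measurable, almost surely finite Ō_p-valued random vector Y with Y∘θ = Ψ^p(Y) P-a.s.; moreover every such solution Y satisfies Y(p) = Z_1 a.s. and Y(i) ≤ Z_{p+1−i} a.s. for every i ∈ {1,…,p}, i.e. Y ≺ (Z_p, Z_{p−1}, …, Z_1) a.s. -/

import Mathlib

open MeasureTheory ProbabilityTheory Filter

noncomputable section

/-- Positive part `[x]⁺ = max(x,0)`. -/
def pos (x : ℝ) : ℝ := max x 0

/-- Nondecreasing rearrangement of a finite real vector. -/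
def sortVec {n : ℕ} (u : Fin n → ℝ) : Fin n → ℝ := u ∘ Tuple.sort u

/-- `u` belongs to `Ō_n`: nonnegative and nondecreasing coordinates. -/
def OSorted {n : ℕ} (u : Fin n → ℝ) : Prop := (∀ i, 0 ≤ u i) ∧ Monotone u

/-- Two-sided iterates `θ^n`, `n ∈ ℤ`, of a measurable bijection. -/
def iterZ {Ω : Type*} [MeasurableSpace Ω] (θ : Ω ≃ᵐ Ω) : ℤ → Ω → Ω
  | Int.ofNat n => (⇑θ)^[n]
  | Int.negSucc n => (⇑θ.symm)^[n + 1]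

/-- The term `σ∘θ^{-k} − Σ_{i=1}^k τ∘θ^{-i}` (here `θinv = θ⁻¹`). -/
def Zterm {Ω : Type*} (θinv : Ω → Ω) (σ τ : Ω → ℝ) (k : ℕ) (ω : Ω) : ℝ :=
  σ (θinv^[k] ω) - ∑ i ∈ Finset.Icc 1 k, τ (θinv^[i] ω)

/-- `Z_ℓ = [sup_{k ≥ ℓ} (σ∘θ^{-k} − Σ_{i=1}^k τ∘θ^{-i})]⁺`. -/
def Zfam {Ω : Type*} (θinv : Ω → Ω) (σ τ : Ω → ℝ) (ℓ : ℕ) (ω : Ω) : ℝ :=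
  pos (⨆ k : {k : ℕ // ℓ ≤ k}, Zterm θinv σ τ (k : ℕ) ω)

/-- GI/GI input: the doubly infinite sequences `(σ∘θ^n)` and `(τ∘θ^n)` are
jointly independent, and each is identically distributed. -/
def GIGI {Ω : Type*} [MeasurableSpace Ω] (μ : Measure Ω) (θ : Ω ≃ᵐ Ω) (σ τ : Ω → ℝ) : Prop :=
  iIndepFun
    (fun x : ℤ × Bool => fun ω => if x.2 then σ (iterZ θ x.1 ω) else τ (iterZ θ x.1 ω)) μ
  ∧ (∀ n : ℤ, IdentDistrib (fun ω => σ (iterZ θ n ω)) σ μ μ)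
  ∧ (∀ n : ℤ, IdentDistrib (fun ω => τ (iterZ θ n ω)) τ μ μ)

/-- The distribution of `τ` has unbounded support. -/
def UnboundedSupport {Ω : Type*} [MeasurableSpace Ω] (μ : Measure Ω) (τ : Ω → ℝ) : Prop :=
  ∀ M : ℝ, 0 < M → 0 < μ {ω | M < τ ω}

/-- The Kiefer–Wolfowitz map `G(u) = sorted [u + σe₁ − τ𝟙]⁺`. -/
def Gmap (S : ℕ) (σ τ : ℝ) (u : Fin S → ℝ) : Fin S → ℝ :=
  sortVec fun i => pos (u i + (if (i : ℕ) = 0 then σ else 0) - τ)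

/-- The map `G^p` driving the J_{p+1}SW service profile. -/
def Gp (S p : ℕ) (hS : 0 < S) (σ τ : ℝ) (u : Fin S → ℝ) : Fin S → ℝ :=
  if u ⟨0, hS⟩ = 0 then Gmap S σ τ u
  else sortVec fun i => pos (u i + (if (i : ℕ) = p then σ else 0) - τ)

/-- The map `Γ^p`. -/
def Gamma (p : ℕ) (σ τ : ℝ) (u : Fin p → ℝ) : Fin p → ℝ := fun j =>
  if h : (j : ℕ) + 1 < p then pos (u ⟨(j : ℕ) + 1, h⟩ - τ) else pos (max (u j) σ - τ)

/-- The map `Ψ^p`. -/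
def Psi (p : ℕ) (σ τ : ℝ) (u : Fin p → ℝ) : Fin p → ℝ := fun j =>
  if h : (j : ℕ) + 1 < p then pos (min (max (u j) σ) (u ⟨(j : ℕ) + 1, h⟩) - τ)
  else pos (max (u j) σ - τ)

/-- The map `Φ^p` on `Ō_S` (with `1 ≤ p < S`). -/
def Phi (S p : ℕ) (hp : p < S) (σ τ : ℝ) (u : Fin S → ℝ) : Fin S → ℝ := fun j =>
  let ind : ℝ := if 0 < u ⟨0, Nat.lt_of_le_of_lt (Nat.zero_le p) hp⟩ then u ⟨p, hp⟩ else 0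
  if h : (j : ℕ) + 1 < S then
    if (j : ℕ) < p then pos (min (max (u j) σ) (u ⟨(j : ℕ) + 1, h⟩) - τ)
    else pos (min (max (u j) (σ + ind)) (u ⟨(j : ℕ) + 1, h⟩) - τ)
  else pos (max (u j) (σ + ind) - τ)

/-- The loss-system map `H^p(u) = sorted [u + σ·1_{u(1)=0}e₁ − τ𝟙]⁺`. -/
def Hmap (p : ℕ) (hp : 0 < p) (σ τ : ℝ) (u : Fin p → ℝ) : Fin p → ℝ :=
  sortVec fun i => pos (u i + (if (i : ℕ) = 0 ∧ u ⟨0, hp⟩ = 0 then σ else 0) - τ)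

end


noncomputable section SE5aux
set_option linter.unusedSectionVars false
open scoped ENNReal Topology

section PosLemmas

lemma pos_nonneg (a : ℝ) : 0 ≤ pos a := le_max_right _ _

lemma le_pos (a : ℝ) : a ≤ pos a := le_max_left _ _

lemma pos_mono {a b : ℝ} (h : a ≤ b) : pos a ≤ pos b := max_le_max h le_rfl

lemma pos_eq_self {a : ℝ} (h : 0 ≤ a) : pos a = a := max_eq_left h

lemma pos_of_nonpos {a : ℝ} (h : a ≤ 0) : pos a = 0 := max_eq_right h

lemma pos_pos_sub {a t : ℝ} (ht : 0 ≤ t) : pos (pos a - t) = pos (a - t) := by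
  rcases le_total a 0 with h | h
  · rw [pos_of_nonpos h, pos_of_nonpos (by linarith), pos_of_nonpos (by linarith)]
  · rw [pos_eq_self h]

lemma pos_max (a b : ℝ) : pos (max a b) = max (pos a) (pos b) := by
  rcases le_total a b with h | h
  · rw [max_eq_right h, max_eq_right (pos_mono h)]
  · rw [max_eq_left h, max_eq_left (pos_mono h)]

lemma pos_sub_max (a b t : ℝ) : pos (max a b - t) = max (pos (a - t)) (pos (b - t)) := by
  rw [show max a b - t = max (a-t) (b-t) from (max_sub_sub_right a b t).symm, pos_max]

end PosLemmas

section PsiLemmas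

variable {p : ℕ} {a b : ℝ}

lemma Psi_nonneg (u : Fin p → ℝ) (j : Fin p) : 0 ≤ Psi p a b u j := by
  unfold Psi; split <;> exact pos_nonneg _

lemma Psi_mono {u v : Fin p → ℝ} (h : ∀ j, u j ≤ v j) (j : Fin p) :
    Psi p a b u j ≤ Psi p a b v j := by
  unfold Psi; split
  · exact pos_mono (by gcongr <;> [exact h j; exact h _])
  · exact pos_mono (by gcongr; exact h j)

lemma Psi_last (hp : 0 < p) (u : Fin p → ℝ) :
    Psi p a b u ⟨p - 1, by omega⟩ = pos (max (u ⟨p - 1, by omega⟩) a - b) := by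
  unfold Psi; rw [dif_neg (by simp; omega)]

lemma Psi_interior (u : Fin p → ℝ) (j : ℕ) (h : j + 1 < p) :
    Psi p a b u ⟨j, by omega⟩ =
      pos (min (max (u ⟨j, by omega⟩) a) (u ⟨j + 1, h⟩) - b) := by
  unfold Psi; rw [dif_pos (by simpa using h)]

lemma Psi_sorted {u : Fin p → ℝ} (hu : OSorted u) : OSorted (Psi p a b u) := by
  refine ⟨fun j => Psi_nonneg u j, ?_⟩
  intro i j hij
  unfold Psi
  rcases lt_or_ge ((i : ℕ) + 1) p with hi | hi
  · rcases lt_or_ge ((j : ℕ) + 1) p with hj | hj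
    · rw [dif_pos hi, dif_pos hj]
      refine pos_mono (by gcongr <;> [exact hu.2 hij; exact hu.2 (by simp only [Fin.le_def]; exact Nat.succ_le_succ hij)])
    · rw [dif_pos hi, dif_neg (by omega)]
      refine pos_mono (sub_le_sub_right ?_ _)
      exact le_trans (min_le_right _ _) (le_trans (hu.2 (show (⟨(i:ℕ)+1, hi⟩ : Fin p) ≤ j by
        simp [Fin.le_def]; omega)) (le_max_left _ _))
  · have : i = j := by
      have h1 : (i : ℕ) ≤ j := hij
      have h2 : (j : ℕ) < p := j.isLt
      exact Fin.ext (by omega)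
    subst this; exact le_rfl

lemma Psi_tendsto {u : ℕ → Fin p → ℝ} {v : Fin p → ℝ}
    (h : ∀ j, Tendsto (fun n => u n j) atTop (nhds (v j))) (j : Fin p) :
    Tendsto (fun n => Psi p a b (u n) j) atTop (nhds (Psi p a b v j)) := by
  unfold Psi; split
  · exact ((((h j).max tendsto_const_nhds).min (h _)).sub tendsto_const_nhds).max
      tendsto_const_nhds
  · exact (((h j).max tendsto_const_nhds).sub tendsto_const_nhds).max tendsto_const_nhds

end PsiLemmas

section B
variable {Ω : Type*} (f : Ω → Ω) (σ τ : Ω → ℝ)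

/-- `T_k = Σ_{i=1}^k τ(f^i ω)`. -/
def Tsum (k : ℕ) (ω : Ω) : ℝ := ∑ i ∈ Finset.Icc 1 k, τ (f^[i] ω)

variable {f σ τ}

lemma Tsum_zero (ω : Ω) : Tsum f τ 0 ω = 0 := by simp [Tsum]

lemma Tsum_top (k : ℕ) (ω : Ω) :
    Tsum f τ (k + 1) ω = Tsum f τ k ω + τ (f^[k+1] ω) := by
  rw [Tsum, Finset.sum_Icc_succ_top (by omega), ← Tsum]

lemma Tsum_succ (k : ℕ) (ω : Ω) :
    Tsum f τ (k + 1) ω = Tsum f τ k (f ω) + τ (f ω) := by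
  induction k with
  | zero => simp [Tsum]
  | succ k ih =>
      rw [Tsum_top (k+1) ω, ih, Tsum_top k (f ω), ← Function.iterate_succ_apply]
      ring

lemma Tsum_nonneg {ω : Ω} (h : ∀ i : ℕ, 0 ≤ τ (f^[i] ω)) (k : ℕ) : 0 ≤ Tsum f τ k ω :=
  Finset.sum_nonneg fun i _ => h i

lemma Tsum_mono {ω : Ω} (h : ∀ i : ℕ, 0 ≤ τ (f^[i] ω)) :
    Monotone (fun k => Tsum f τ k ω) := by
  apply monotone_nat_of_le_succ
  intro k; rw [Tsum_top]; have := h (k+1); linarith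

lemma Zterm_zero (ω : Ω) : Zterm f σ τ 0 ω = σ ω := by simp [Zterm]

lemma Zterm_eq (k : ℕ) (ω : Ω) : Zterm f σ τ k ω = σ (f^[k] ω) - Tsum f τ k ω := rfl

lemma Zterm_succ (k : ℕ) (ω : Ω) :
    Zterm f σ τ (k + 1) ω = Zterm f σ τ k (f ω) - τ (f ω) := by
  rw [Zterm_eq, Zterm_eq, Tsum_succ, Function.iterate_succ_apply]; ring

/-- boundedness of the family of terms -/
def ZBdd (f : Ω → Ω) (σ τ : Ω → ℝ) (ω : Ω) : Prop := ∃ C : ℝ, ∀ k : ℕ, Zterm f σ τ k ω ≤ C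

lemma ZBdd_shift {ω : Ω} : ZBdd f σ τ ω ↔ ZBdd f σ τ (f ω) := by
  constructor
  · rintro ⟨C, h⟩
    exact ⟨C + τ (f ω), fun k => by have := h (k + 1); rw [Zterm_succ] at this; linarith⟩
  · rintro ⟨C, h⟩
    refine ⟨max (σ ω) (C - τ (f ω)), fun k => ?_⟩
    cases k with
    | zero => rw [Zterm_zero]; exact le_max_left _ _
    | succ k =>
        rw [Zterm_succ]
        exact le_trans (by have := h k; linarith) (le_max_right _ _)

instance instNonemptyGe (ℓ : ℕ) : Nonempty {k : ℕ // ℓ ≤ k} := ⟨⟨ℓ, le_rfl⟩⟩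

lemma ZBdd.bddAbove {ω : Ω} (h : ZBdd f σ τ ω) (ℓ : ℕ) :
    BddAbove (Set.range fun k : {k : ℕ // ℓ ≤ k} => Zterm f σ τ (k : ℕ) ω) := by
  obtain ⟨C, h⟩ := h
  exact ⟨C, by rintro x ⟨k, rfl⟩; exact h k⟩

lemma sup_shift {ω : Ω} (hB : ZBdd f σ τ ω) (ℓ : ℕ) :
    (⨆ k : {k : ℕ // ℓ + 1 ≤ k}, Zterm f σ τ (k : ℕ) ω)
      = (⨆ k : {k : ℕ // ℓ ≤ k}, Zterm f σ τ (k : ℕ) (f ω)) - τ (f ω) := by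
  have hBf : ZBdd f σ τ (f ω) := ZBdd_shift.mp hB
  apply le_antisymm
  · apply ciSup_le
    rintro ⟨k, hk⟩
    obtain ⟨m, rfl⟩ : ∃ m, k = m + 1 := ⟨k - 1, by omega⟩
    rw [Zterm_succ]
    exact sub_le_sub_right (le_ciSup (hBf.bddAbove ℓ) ⟨m, by omega⟩) _
  · rw [sub_le_iff_le_add]
    apply ciSup_le
    rintro ⟨k, hk⟩
    have : Zterm f σ τ k (f ω) = Zterm f σ τ (k + 1) ω + τ (f ω) := by
      rw [Zterm_succ]; ring
    rw [this]
    exact add_le_add (le_ciSup (hB.bddAbove (ℓ+1)) ⟨k + 1, by omega⟩) le_rfl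

lemma Zfam_succ {ω : Ω} (hB : ZBdd f σ τ ω) (ht : 0 ≤ τ (f ω)) (ℓ : ℕ) :
    Zfam f σ τ (ℓ + 1) ω = pos (Zfam f σ τ ℓ (f ω) - τ (f ω)) := by
  rw [Zfam, sup_shift hB, Zfam, pos_pos_sub ht]

lemma Zfam_split {ω : Ω} (hB : ZBdd f σ τ ω) (ℓ : ℕ) :
    Zfam f σ τ ℓ ω = max (pos (Zterm f σ τ ℓ ω)) (Zfam f σ τ (ℓ + 1) ω) := by
  rw [Zfam, Zfam, ← pos_max]
  congr 1
  apply le_antisymm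
  · apply ciSup_le
    rintro ⟨k, hk⟩
    rcases eq_or_lt_of_le hk with h | h
    · subst h; exact le_max_left _ _
    · exact le_max_of_le_right (le_ciSup (hB.bddAbove (ℓ+1)) ⟨k, by omega⟩)
  · apply max_le
    · exact le_ciSup (hB.bddAbove ℓ) ⟨ℓ, le_rfl⟩
    · exact ciSup_le fun ⟨k, hk⟩ => le_ciSup (hB.bddAbove ℓ) ⟨k, by omega⟩

lemma Zfam_nonneg (ℓ : ℕ) (ω : Ω) : 0 ≤ Zfam f σ τ ℓ ω := pos_nonneg _

lemma Zfam_antitone_succ {ω : Ω} (hB : ZBdd f σ τ ω) (ℓ : ℕ) :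
    Zfam f σ τ (ℓ + 1) ω ≤ Zfam f σ τ ℓ ω := by
  rw [Zfam_split hB ℓ]; exact le_max_right _ _

lemma pos_Zterm_le_Zfam {ω : Ω} (hB : ZBdd f σ τ ω) {ℓ k : ℕ} (hk : ℓ ≤ k) :
    pos (Zterm f σ τ k ω) ≤ Zfam f σ τ ℓ ω :=
  pos_mono (le_ciSup (hB.bddAbove ℓ) ⟨k, hk⟩)

lemma Zfam_le {ω : Ω} {c : ℝ} (h : ∀ k, ℓ ≤ k → Zterm f σ τ k ω ≤ c) (hc : 0 ≤ c) :
    Zfam f σ τ ℓ ω ≤ c :=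
  max_le (ciSup_le fun ⟨k, hk⟩ => h k hk) hc

lemma Zterm_congr {σ' τ' : Ω → ℝ} {ω : Ω}
    (h : ∀ i : ℕ, σ (f^[i] ω) = σ' (f^[i] ω) ∧ τ (f^[i] ω) = τ' (f^[i] ω)) (k : ℕ) :
    Zterm f σ τ k ω = Zterm f σ' τ' k ω := by
  unfold Zterm
  rw [(h k).1]
  congr 1
  exact Finset.sum_congr rfl fun i _ => (h i).2

lemma Zfam_congr {σ' τ' : Ω → ℝ} {ω : Ω}
    (h : ∀ i : ℕ, σ (f^[i] ω) = σ' (f^[i] ω) ∧ τ (f^[i] ω) = τ' (f^[i] ω)) (ℓ : ℕ) :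
    Zfam f σ τ ℓ ω = Zfam f σ' τ' ℓ ω := by
  unfold Zfam
  congr 1
  exact iSup_congr fun k => Zterm_congr h _

lemma ZBdd_congr {σ' τ' : Ω → ℝ} {ω : Ω}
    (h : ∀ i : ℕ, σ (f^[i] ω) = σ' (f^[i] ω) ∧ τ (f^[i] ω) = τ' (f^[i] ω)) :
    ZBdd f σ τ ω ↔ ZBdd f σ' τ' ω := by
  unfold ZBdd
  constructor <;> rintro ⟨C, hC⟩ <;> refine ⟨C, fun k => ?_⟩
  · rw [← Zterm_congr h]; exact hC k
  · rw [Zterm_congr h]; exact hC k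

end B

section C
variable {Ω : Type*} [MeasurableSpace Ω] {μ : Measure Ω} [IsProbabilityMeasure μ]
  {θ : Ω ≃ᵐ Ω} (hergo : Ergodic (⇑θ) μ)
include hergo

lemma ergodic_symm : Ergodic (⇑θ.symm) μ := by
  refine ⟨MeasurePreserving.symm θ hergo.toMeasurePreserving, ⟨fun s hs hinv => ?_⟩⟩
  refine hergo.toPreErgodic.aeconst_set hs ?_
  have := congrArg (fun t => ⇑θ ⁻¹' t) hinv
  simpa [Set.preimage_preimage] using this.symm

lemma ae_iterate {P : Ω → Prop} (h : ∀ᵐ ω ∂μ, P ω) :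
    ∀ᵐ ω ∂μ, ∀ n : ℕ, P ((⇑θ)^[n] ω) ∧ P ((⇑θ.symm)^[n] ω) := by
  rw [ae_all_iff]
  intro n
  exact ((hergo.toMeasurePreserving.iterate n).quasiMeasurePreserving.ae h).and
    (((MeasurePreserving.symm θ hergo.toMeasurePreserving).iterate n).quasiMeasurePreserving.ae h)
end C

section Cint
variable {Ω : Type*} [MeasurableSpace Ω] {μ : Measure Ω} [IsProbabilityMeasure μ]

omit [IsProbabilityMeasure μ] in
lemma integrable_max' {A B : Ω → ℝ} (hA : Integrable A μ) (hB : Integrable B μ) :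
    Integrable (fun ω => max (A ω) (B ω)) μ := by
  have := hA.sup hB
  exact this

lemma integral_pos_of_ae_pos {τ : Ω → ℝ} (hτint : Integrable τ μ) (hτ0 : ∀ᵐ ω ∂μ, 0 < τ ω) :
    0 < ∫ ω, τ ω ∂μ := by
  rw [integral_pos_iff_support_of_nonneg_ae (hτ0.mono fun ω h => h.le) hτint]
  have h1 : μ (Function.support τ)ᶜ = 0 := by
    have : ∀ᵐ ω ∂μ, ω ∈ Function.support τ := hτ0.mono fun ω h => ne_of_gt h
    simpa [ae_iff, Function.support, Set.compl_setOf] using this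
  have h2 : (1 : ℝ≥0∞) ≤ μ (Function.support τ) + μ (Function.support τ)ᶜ := by
    rw [← measure_univ (μ := μ), ← Set.union_compl_self (Function.support τ)]
    exact measure_union_le _ _
  rw [h1, add_zero] at h2
  exact lt_of_lt_of_le (by norm_num) h2
end Cint

section D
variable {Ω : Type*} [MeasurableSpace Ω] {μ : Measure Ω} [IsProbabilityMeasure μ]
  {θ : Ω ≃ᵐ Ω}

/-- Loynes/Garsia auxiliary maxima sequence. -/
def Mseq (f : Ω → Ω) (σ τ : Ω → ℝ) : ℕ → Ω → ℝ
  | 0 => σ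
  | n + 1 => fun ω => max (σ ω) (Mseq f σ τ n (f ω) - τ (f ω))

variable {f : Ω → Ω} {σ τ : Ω → ℝ}

lemma Mseq_succ (n : ℕ) (ω : Ω) :
    Mseq f σ τ (n + 1) ω = max (σ ω) (Mseq f σ τ n (f ω) - τ (f ω)) := rfl

lemma Mseq_step_mono : ∀ n ω, Mseq f σ τ n ω ≤ Mseq f σ τ (n + 1) ω := by
  intro n
  induction n with
  | zero => intro ω; exact le_max_left _ _
  | succ n ih =>
      intro ω
      rw [Mseq_succ, Mseq_succ]
      exact max_le_max le_rfl (sub_le_sub_right (ih (f ω)) _)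

lemma Mseq_ge_sigma : ∀ n ω, σ ω ≤ Mseq f σ τ n ω := by
  intro n ω
  cases n with
  | zero => exact le_rfl
  | succ n => exact le_max_left _ _

lemma Zterm_le_Mseq : ∀ n k, k ≤ n → ∀ ω : Ω, Zterm f σ τ k ω ≤ Mseq f σ τ n ω := by
  intro n
  induction n with
  | zero => intro k hk ω; interval_cases k; rw [Zterm_zero]; exact le_rfl
  | succ n ih =>
      intro k hk ω
      cases k with
      | zero => rw [Zterm_zero]; exact Mseq_ge_sigma _ _
      | succ k =>
          rw [Zterm_succ, Mseq_succ]
          exact le_max_of_le_right (sub_le_sub_right (ih k (by omega) (f ω)) _)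

lemma Mseq_sub (n : ℕ) (ω : Ω) :
    Mseq f σ τ (n + 1) ω - Mseq f σ τ n (f ω)
      = max (σ ω - Mseq f σ τ n (f ω)) (-τ (f ω)) := by
  have h : -τ (f ω) = (Mseq f σ τ n (f ω) - τ (f ω)) - Mseq f σ τ n (f ω) := by ring
  rw [h, max_sub_sub_right, Mseq_succ]

lemma tendsto_Mseq_of_not_ZBdd {ω : Ω} (hω : ¬ ZBdd f σ τ ω) :
    Tendsto (fun n => Mseq f σ τ n ω) atTop atTop := by
  apply tendsto_atTop_atTop_of_monotone (monotone_nat_of_le_succ fun n => Mseq_step_mono n ω)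
  intro C
  unfold ZBdd at hω
  push_neg at hω
  obtain ⟨k, hk⟩ := hω C
  exact ⟨k, hk.le.trans (Zterm_le_Mseq k k le_rfl ω)⟩

variable (hσm : Measurable σ) (hτm : Measurable τ)
include hσm hτm

lemma Zterm_meas (k : ℕ) : Measurable (Zterm (⇑θ.symm) σ τ k) := by
  apply (hσm.comp (θ.symm.measurable.iterate k)).sub
  exact Finset.measurable_sum _ fun i _ => hτm.comp (θ.symm.measurable.iterate i)

lemma Tsum_meas (k : ℕ) : Measurable (Tsum (⇑θ.symm) τ k) :=
  Finset.measurable_sum _ fun i _ => hτm.comp (θ.symm.measurable.iterate i)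

lemma Mseq_meas (n : ℕ) : Measurable (Mseq (⇑θ.symm) σ τ n) := by
  induction n with
  | zero => exact hσm
  | succ n ih =>
      exact hσm.max ((ih.comp θ.symm.measurable).sub (hτm.comp θ.symm.measurable))

variable (hergo : Ergodic (⇑θ) μ) (hσint : Integrable σ μ) (hτint : Integrable τ μ)
include hergo hσint hτint

lemma Mseq_int (n : ℕ) : Integrable (Mseq (⇑θ.symm) σ τ n) μ := by
  have mp := MeasurePreserving.symm θ hergo.toMeasurePreserving
  induction n with
  | zero => exact hσint
  | succ n ih =>
      apply integrable_max' hσint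
      exact ((mp.integrable_comp ih.aestronglyMeasurable).mpr ih).sub
        ((mp.integrable_comp hτint.aestronglyMeasurable).mpr hτint)

theorem ae_ZBdd (hτ0 : ∀ᵐ ω ∂μ, 0 < τ ω) : ∀ᵐ ω ∂μ, ZBdd (⇑θ.symm) σ τ ω := by
  have hτpos : 0 < ∫ ω, τ ω ∂μ := integral_pos_of_ae_pos hτint hτ0
  have mp := MeasurePreserving.symm θ hergo.toMeasurePreserving
  set f := ⇑θ.symm with hf
  set S : Set Ω := ⋃ C : ℕ, ⋂ k : ℕ, {ω | Zterm f σ τ k ω ≤ C} with hS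
  have hSmeas : MeasurableSet S :=
    MeasurableSet.iUnion fun C => MeasurableSet.iInter fun k =>
      measurableSet_le (Zterm_meas hσm hτm k) measurable_const
  have hS_iff : ∀ ω, ω ∈ S ↔ ZBdd f σ τ ω := by
    intro ω
    constructor
    · rintro hω
      simp only [hS, Set.mem_iUnion, Set.mem_iInter, Set.mem_setOf_eq] at hω
      obtain ⟨C, hC⟩ := hω
      exact ⟨C, hC⟩
    · rintro ⟨C, hC⟩
      obtain ⟨n, hn⟩ := exists_nat_ge C
      simp only [hS, Set.mem_iUnion, Set.mem_iInter, Set.mem_setOf_eq]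
      exact ⟨n, fun k => (hC k).trans hn⟩
  have hinv : f ⁻¹' S = S := by
    ext ω
    rw [Set.mem_preimage, hS_iff, hS_iff]
    exact (ZBdd_shift (ω := ω)).symm
  rcases (ergodic_symm hergo).toPreErgodic.ae_mem_or_ae_notMem hSmeas hinv with h | h
  · exact h.mono fun ω hω => (hS_iff ω).mp hω
  · exfalso
    have hnb : ∀ᵐ ω ∂μ, ¬ ZBdd f σ τ ω := h.mono fun ω hω hb => hω ((hS_iff ω).mpr hb)
    set F : ℕ → Ω → ℝ := fun n ω => Mseq f σ τ (n + 1) ω - Mseq f σ τ n (f ω) with hF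
    have hint := fun n => Mseq_int hσm hτm hergo hσint hτint n
    have hintc : ∀ n, Integrable (fun ω => Mseq f σ τ n (f ω)) μ := fun n =>
      (mp.integrable_comp (hint n).aestronglyMeasurable).mpr (hint n)
    have hcomp : ∀ n, ∫ ω, Mseq f σ τ n (f ω) ∂μ = ∫ ω, Mseq f σ τ n ω ∂μ := fun n =>
      mp.integral_comp' (Mseq f σ τ n)
    have hnonneg : ∀ n, 0 ≤ ∫ ω, F n ω ∂μ := by
      intro n
      rw [hF]
      simp only
      rw [integral_sub (hint (n + 1)) (hintc n), sub_nonneg, hcomp n]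
      exact integral_mono (hint n) (hint (n + 1)) fun ω => Mseq_step_mono n ω
    have hbint : Integrable (fun ω => |σ ω| + |σ (f ω)| + |τ (f ω)|) μ := by
      apply (hσint.abs.add ((mp.integrable_comp hσint.aestronglyMeasurable).mpr hσint).abs).add
        ((mp.integrable_comp hτint.aestronglyMeasurable).mpr hτint).abs
    have hlim : Tendsto (fun n => ∫ ω, F n ω ∂μ) atTop (𝓝 (∫ ω, -τ (f ω) ∂μ)) := by
      apply tendsto_integral_of_dominated_convergence (fun ω => |σ ω| + |σ (f ω)| + |τ (f ω)|)
      · intro n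
        exact ((Mseq_meas hσm hτm (n + 1)).sub
          ((Mseq_meas hσm hτm n).comp θ.symm.measurable)).aestronglyMeasurable
      · exact hbint
      · intro n
        apply Filter.Eventually.of_forall
        intro ω
        rw [hF]
        simp only
        rw [Mseq_sub, Real.norm_eq_abs, abs_le]
        constructor
        · have h1 : -τ (f ω) ≤ max (σ ω - Mseq f σ τ n (f ω)) (-τ (f ω)) := le_max_right _ _
          have := abs_nonneg (σ ω)
          have := abs_nonneg (σ (f ω))
          have := le_abs_self (τ (f ω))
          linarith
        · have h2 : σ ω - Mseq f σ τ n (f ω) ≤ |σ ω| + |σ (f ω)| := by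
            have := Mseq_ge_sigma (f := f) (σ := σ) (τ := τ) n (f ω)
            have := le_abs_self (σ ω)
            have := neg_abs_le (σ (f ω))
            linarith
          have h3 : -τ (f ω) ≤ |τ (f ω)| := neg_le_abs _
          have := abs_nonneg (τ (f ω))
          have := abs_nonneg (σ ω)
          have := abs_nonneg (σ (f ω))
          exact max_le (by linarith) (by linarith)
      · filter_upwards [hnb] with ω hω
        have hωf : ¬ ZBdd f σ τ (f ω) := fun hb => hω (ZBdd_shift.mpr hb)
        have htend := tendsto_Mseq_of_not_ZBdd hωf
        have hev : ∀ᶠ n in atTop, F n ω = -τ (f ω) := by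
          filter_upwards [htend.eventually_ge_atTop (σ ω + τ (f ω))] with n hn
          rw [hF]
          simp only
          rw [Mseq_sub]
          exact max_eq_right (by linarith)
        exact Tendsto.congr' (EventuallyEq.symm hev) tendsto_const_nhds
    have hval : ∫ ω, -τ (f ω) ∂μ = -∫ ω, τ ω ∂μ := by
      rw [integral_neg, mp.integral_comp' τ]
    rw [hval] at hlim
    have : (0:ℝ) ≤ -∫ ω, τ ω ∂μ := ge_of_tendsto hlim (Filter.Eventually.of_forall hnonneg)
    linarith
theorem ae_tendsto_Tsum (hτ0 : ∀ᵐ ω ∂μ, 0 < τ ω) :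
    ∀ᵐ ω ∂μ, Tendsto (fun k => Tsum (⇑θ.symm) τ k ω) atTop atTop := by
  have mp := MeasurePreserving.symm θ hergo.toMeasurePreserving
  set f := ⇑θ.symm with hf
  have hposit : ∀ᵐ ω ∂μ, ∀ i : ℕ, 0 < τ (f^[i] ω) := by
    rw [ae_all_iff]
    exact fun i => (mp.iterate i).quasiMeasurePreserving.ae hτ0
  set U : Set Ω := ⋂ C : ℕ, ⋃ k : ℕ, {ω | (C : ℝ) ≤ Tsum f τ k ω} with hU
  have hUmeas : MeasurableSet U :=
    MeasurableSet.iInter fun C => MeasurableSet.iUnion fun k =>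
      measurableSet_le measurable_const (Tsum_meas hσm hτm k)
  have hU_iff : ∀ ω, ω ∈ U ↔ ∀ C : ℕ, ∃ k, (C : ℝ) ≤ Tsum f τ k ω := by
    intro ω
    simp [hU]
  have hinv : f ⁻¹' U = U := by
    ext ω
    rw [Set.mem_preimage, hU_iff, hU_iff]
    constructor
    · intro h C
      obtain ⟨C2, hC2⟩ := exists_nat_ge ((C : ℝ) - τ (f ω))
      obtain ⟨k, hk⟩ := h C2
      exact ⟨k + 1, by rw [Tsum_succ]; linarith⟩
    · intro h C
      obtain ⟨C2, hC2⟩ := exists_nat_ge (max ((C : ℝ) + τ (f ω)) 1)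
      obtain ⟨k, hk⟩ := h C2
      have hmax1 := le_max_left ((C : ℝ) + τ (f ω)) 1
      have hmax2 := le_max_right ((C : ℝ) + τ (f ω)) 1
      have hk1 : k ≠ 0 := by
        rintro rfl
        rw [Tsum_zero] at hk
        linarith
      obtain ⟨m, rfl⟩ := Nat.exists_eq_succ_of_ne_zero hk1
      rw [Tsum_succ] at hk
      exact ⟨m, by linarith⟩
  rcases (ergodic_symm hergo).toPreErgodic.ae_mem_or_ae_notMem hUmeas hinv with h | h
  · filter_upwards [h, hposit] with ω hω hpos
    apply tendsto_atTop_atTop_of_monotone (Tsum_mono fun i => (hpos i).le)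
    intro C
    obtain ⟨C', hC'⟩ := exists_nat_ge C
    obtain ⟨k, hk⟩ := (hU_iff ω).mp hω C'
    exact ⟨k, hC'.trans hk⟩
  · exfalso
    have hE : ∃ n : ℕ, μ {ω | 1 / ((n : ℝ) + 1) < τ ω} ≠ 0 := by
      by_contra h'
      push_neg at h'
      have hsub : {ω | 0 < τ ω} ⊆ ⋃ n : ℕ, {ω | 1 / ((n : ℝ) + 1) < τ ω} := by
        intro ω hω
        obtain ⟨n, hn⟩ := exists_nat_one_div_lt (show (0:ℝ) < τ ω from hω)
        exact Set.mem_iUnion.mpr ⟨n, hn⟩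
      have h0 : μ {ω | 0 < τ ω} = 0 :=
        measure_mono_null hsub (measure_iUnion_null fun n => h' n)
      have h1 : μ {ω | ¬ (0 < τ ω)} = 0 := by simpa [ae_iff] using hτ0
      have : (1 : ℝ≥0∞) ≤ μ {ω | 0 < τ ω} + μ {ω | ¬ (0 < τ ω)} := by
        rw [← measure_univ (μ := μ)]
        refine le_trans (measure_mono ?_) (measure_union_le _ _)
        intro ω _
        by_cases hc : 0 < τ ω
        · exact Set.mem_union_left _ hc
        · exact Set.mem_union_right _ hc
      rw [h0, h1, add_zero] at this
      simp at this
    obtain ⟨n, hEn⟩ := hE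
    set E : Set Ω := {ω | 1 / ((n : ℝ) + 1) < τ ω} with hEdef
    have hEmeas : MeasurableSet E := measurableSet_lt measurable_const hτm
    set F : ℕ → Ω → ℝ := fun k ω => E.indicator (fun _ => (1 : ℝ)) (f^[k + 1] ω) with hFd
    have hFint : ∀ k, ∫ ω, F k ω ∂μ = (μ E).toReal := by
      intro k
      have hmpk := mp.iterate (k + 1)
      have hmeasg : AEStronglyMeasurable (E.indicator (fun _ => (1 : ℝ))) μ :=
        (measurable_const.indicator hEmeas).aestronglyMeasurable
      have h1 : ∫ ω, F k ω ∂μ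
          = ∫ ω, (E.indicator (fun _ => (1 : ℝ))) ω ∂(Measure.map (f^[k + 1]) μ) := by
        rw [integral_map (θ.symm.measurable.iterate (k + 1)).aemeasurable]
        rw [hmpk.map_eq]
        exact hmeasg
      rw [h1, hmpk.map_eq, integral_indicator_const _ hEmeas]
      simp [Measure.real]
    have hlim0 : Tendsto (fun k => ∫ ω, F k ω ∂μ) atTop (𝓝 (∫ _ω, (0:ℝ) ∂μ)) := by
      apply tendsto_integral_of_dominated_convergence (fun _ => (1 : ℝ))
      · intro k
        exact ((measurable_const.indicator hEmeas).comp
          (θ.symm.measurable.iterate (k + 1))).aestronglyMeasurable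
      · exact integrable_const 1
      · intro k
        apply Filter.Eventually.of_forall
        intro ω
        rw [hFd]
        simp only
        rw [Real.norm_eq_abs]
        rw [Set.indicator_apply]
        split_ifs <;> simp
      · have hnU : ∀ᵐ ω ∂μ, ω ∉ U := h
        filter_upwards [hnU, hposit] with ω hω hpos
        rw [hU_iff] at hω
        push_neg at hω
        obtain ⟨C, hC⟩ := hω
        have hmono : Monotone (fun k => Tsum f τ k ω) := Tsum_mono fun i => (hpos i).le
        have hbdd : BddAbove (Set.range fun k => Tsum f τ k ω) := by
          refine ⟨C, ?_⟩
          rintro x ⟨k, rfl⟩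
          exact (hC k).le
        have htd := tendsto_atTop_ciSup hmono hbdd
        have hdiff : Tendsto (fun k => τ (f^[k + 1] ω)) atTop (𝓝 0) := by
          have h2 : Tendsto (fun k => Tsum f τ (k + 1) ω - Tsum f τ k ω) atTop
              (𝓝 ((⨆ k, Tsum f τ k ω) - (⨆ k, Tsum f τ k ω))) :=
            (htd.comp (tendsto_add_atTop_nat 1)).sub htd
          rw [sub_self] at h2
          apply h2.congr
          intro k
          rw [Tsum_top]
          ring
        have hev : ∀ᶠ k in atTop, F k ω = 0 := by
          have hlt : ∀ᶠ k in atTop, τ (f^[k + 1] ω) < 1 / ((n : ℝ) + 1) := by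
            apply hdiff.eventually_lt_const
            positivity
          filter_upwards [hlt] with k hk
          rw [hFd]
          simp only
          apply Set.indicator_of_notMem
          rw [hEdef]
          simp only [Set.mem_setOf_eq, not_lt]
          exact hk.le
        exact Tendsto.congr' (EventuallyEq.symm hev) tendsto_const_nhds
    rw [integral_zero] at hlim0
    have hconst : Tendsto (fun _ : ℕ => (μ E).toReal) atTop (𝓝 0) := by
      apply hlim0.congr
      intro k
      rw [hFint k]
    have : (μ E).toReal = 0 := tendsto_nhds_unique tendsto_const_nhds hconst
    rw [ENNReal.toReal_eq_zero_iff] at this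
    rcases this with h' | h'
    · exact hEn h'
    · exact (measure_ne_top μ E) h'

end D

section F
variable {Ω : Type*}

/-- Loynes iteration for `Ψ^p`. -/
def Xseq (f : Ω → Ω) (p : ℕ) (σ τ : Ω → ℝ) : ℕ → Ω → Fin p → ℝ
  | 0 => fun _ _ => 0
  | n + 1 => fun ω => Psi p (σ (f ω)) (τ (f ω)) (Xseq f p σ τ n (f ω))

variable {f : Ω → Ω} {σ τ : Ω → ℝ} {p : ℕ}

lemma Xseq_succ (n : ℕ) (ω : Ω) :
    Xseq f p σ τ (n + 1) ω = Psi p (σ (f ω)) (τ (f ω)) (Xseq f p σ τ n (f ω)) := rfl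

lemma Xseq_osorted : ∀ n (ω : Ω), OSorted (Xseq f p σ τ n ω) := by
  intro n
  induction n with
  | zero => exact fun ω => ⟨fun i => le_rfl, monotone_const⟩
  | succ n ih => exact fun ω => Psi_sorted (ih (f ω))

lemma Xseq_step_mono : ∀ n (ω : Ω) (j : Fin p), Xseq f p σ τ n ω j ≤ Xseq f p σ τ (n + 1) ω j := by
  intro n
  induction n with
  | zero => exact fun ω j => Psi_nonneg _ _
  | succ n ih => exact fun ω j => Psi_mono (fun i => ih (f ω) i) j

lemma Xseq_mono (ω : Ω) (j : Fin p) : Monotone fun n => Xseq f p σ τ n ω j :=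
  monotone_nat_of_le_succ fun n => Xseq_step_mono n ω j

/-- On points with sane orbit data, the last coordinate of the Loynes iterates is
dominated by `Z₁`. -/
lemma Xseq_last_le (hp : 0 < p) :
    ∀ n (ω : Ω), (∀ i : ℕ, 0 ≤ τ (f^[i] ω)) → ZBdd f σ τ ω →
      Xseq f p σ τ n ω ⟨p - 1, by omega⟩ ≤ Zfam f σ τ 1 ω := by
  intro n
  induction n with
  | zero => exact fun ω _ _ => Zfam_nonneg 1 ω
  | succ n ih =>
      intro ω hτ hB
      have hτf : ∀ i : ℕ, 0 ≤ τ (f^[i] (f ω)) := fun i => by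
        rw [← Function.iterate_succ_apply]; exact hτ (i + 1)
      have hBf : ZBdd f σ τ (f ω) := ZBdd_shift.mp hB
      rw [Xseq_succ, Psi_last hp, pos_sub_max]
      apply max_le
      · have h1 : pos (Xseq f p σ τ n (f ω) ⟨p - 1, by omega⟩ - τ (f ω))
            ≤ pos (Zfam f σ τ 1 (f ω) - τ (f ω)) :=
          pos_mono (sub_le_sub_right (ih (f ω) hτf hBf) _)
        have h2 : pos (Zfam f σ τ 1 (f ω) - τ (f ω)) = Zfam f σ τ 2 ω :=
          (Zfam_succ hB (by simpa using hτ 1) 1).symm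
        rw [h2] at h1
        exact h1.trans (Zfam_antitone_succ hB 1)
      · have h3 : σ (f ω) - τ (f ω) = Zterm f σ τ 1 ω := by
          rw [show (1 : ℕ) = 0 + 1 from rfl, Zterm_succ, Zterm_zero]
        rw [h3]
        exact pos_Zterm_le_Zfam hB le_rfl

lemma Xseq_le (hp : 0 < p) (n : ℕ) (ω : Ω) (hτ : ∀ i : ℕ, 0 ≤ τ (f^[i] ω))
    (hB : ZBdd f σ τ ω) (j : Fin p) : Xseq f p σ τ n ω j ≤ Zfam f σ τ 1 ω := by
  refine le_trans ?_ (Xseq_last_le hp n ω hτ hB)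
  exact (Xseq_osorted n ω).2 (by rw [Fin.le_def]; simp; omega)

variable [MeasurableSpace Ω]

lemma Psi_meas {a b : Ω → ℝ} (ha : Measurable a) (hb : Measurable b)
    {u : Ω → Fin p → ℝ} (hu : ∀ j, Measurable fun ω => u ω j) (j : Fin p) :
    Measurable fun ω => Psi p (a ω) (b ω) (u ω) j := by
  by_cases h : (j : ℕ) + 1 < p
  · simp only [Psi, dif_pos h, pos]
    exact ((((hu j).max ha).min (hu _)).sub hb).max measurable_const
  · simp only [Psi, dif_neg h, pos]
    exact (((hu j).max ha).sub hb).max measurable_const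

lemma Xseq_meas {θ : Ω ≃ᵐ Ω} (hσm : Measurable σ) (hτm : Measurable τ) :
    ∀ n (j : Fin p), Measurable fun ω => Xseq (⇑θ.symm) p σ τ n ω j := by
  intro n
  induction n with
  | zero => exact fun j => measurable_const
  | succ n ih =>
      intro j
      have : (fun ω => Xseq (⇑θ.symm) p σ τ (n + 1) ω j)
          = fun ω => Psi p (σ (θ.symm ω)) (τ (θ.symm ω))
              (Xseq (⇑θ.symm) p σ τ n (θ.symm ω)) j := rfl
      rw [this]
      exact (Psi_meas (hσm.comp θ.symm.measurable) (hτm.comp θ.symm.measurable)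
        (fun i => (ih i).comp θ.symm.measurable) j).comp measurable_id

/-- The candidate stationary profile. -/
def Yc (θ : Ω ≃ᵐ Ω) (p : ℕ) (σ τ : Ω → ℝ) : Ω → Fin p → ℝ := fun ω j =>
  (⨆ n, ENNReal.ofReal (Xseq (⇑θ.symm) p σ τ n ω j)).toReal

lemma Yc_meas {θ : Ω ≃ᵐ Ω} (hσm : Measurable σ) (hτm : Measurable τ) :
    Measurable (Yc θ p σ τ) := by
  apply measurable_pi_lambda
  intro j
  apply ENNReal.measurable_toReal.comp
  exact Measurable.iSup fun n => ENNReal.measurable_ofReal.comp (Xseq_meas hσm hτm n j)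

lemma Yc_tendsto {θ : Ω ≃ᵐ Ω} {ω : Ω} {j : Fin p} {C : ℝ}
    (hC : ∀ n, Xseq (⇑θ.symm) p σ τ n ω j ≤ C) :
    Tendsto (fun n => Xseq (⇑θ.symm) p σ τ n ω j) atTop (𝓝 (Yc θ p σ τ ω j)) := by
  have hbdd : BddAbove (Set.range fun n => Xseq (⇑θ.symm) p σ τ n ω j) :=
    ⟨C, by rintro x ⟨n, rfl⟩; exact hC n⟩
  have h0 : (0 : ℝ) ≤ ⨆ n, Xseq (⇑θ.symm) p σ τ n ω j :=
    le_trans le_rfl (le_ciSup hbdd 0)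
  have hsup : Yc θ p σ τ ω j = ⨆ n, Xseq (⇑θ.symm) p σ τ n ω j := by
    rw [Yc]
    rw [← Monotone.map_ciSup_of_continuousAt ENNReal.continuous_ofReal.continuousAt
      (fun a b hab => ENNReal.ofReal_le_ofReal hab) hbdd]
    rw [ENNReal.toReal_ofReal h0]
  rw [hsup]
  exact tendsto_atTop_ciSup (Xseq_mono ω j) hbdd

end F

section G
variable {Ω : Type*} [MeasurableSpace Ω]

lemma orbit_mem_theta {θ : Ω ≃ᵐ Ω} {P : Ω → Prop} {ω : Ω}
    (h : ∀ n : ℕ, P ((⇑θ)^[n] ω) ∧ P ((⇑θ.symm)^[n] ω)) :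
    ∀ n : ℕ, P ((⇑θ)^[n] (θ ω)) ∧ P ((⇑θ.symm)^[n] (θ ω)) := by
  intro n
  constructor
  · have := (h (n + 1)).1
    rwa [Function.iterate_succ_apply] at this
  · cases n with
    | zero => simpa using (h 1).1
    | succ m =>
        rw [Function.iterate_succ_apply, θ.symm_apply_apply]
        exact (h m).2

lemma orbit_mem_symm {θ : Ω ≃ᵐ Ω} {P : Ω → Prop} {ω : Ω}
    (h : ∀ n : ℕ, P ((⇑θ)^[n] ω) ∧ P ((⇑θ.symm)^[n] ω)) :
    ∀ n : ℕ, P ((⇑θ)^[n] (θ.symm ω)) ∧ P ((⇑θ.symm)^[n] (θ.symm ω)) := by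
  intro n
  constructor
  · cases n with
    | zero => simpa using (h 1).2
    | succ m =>
        rw [Function.iterate_succ_apply, θ.apply_symm_apply]
        exact (h m).1
  · have := (h (n + 1)).2
    rwa [Function.iterate_succ_apply] at this

lemma orbit_mem_symm_iter {θ : Ω ≃ᵐ Ω} {P : Ω → Prop} {ω : Ω}
    (h : ∀ n : ℕ, P ((⇑θ)^[n] ω) ∧ P ((⇑θ.symm)^[n] ω)) (m : ℕ) :
    ∀ n : ℕ, P ((⇑θ)^[n] ((⇑θ.symm)^[m] ω)) ∧ P ((⇑θ.symm)^[n] ((⇑θ.symm)^[m] ω)) := by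
  induction m with
  | zero => simpa using h
  | succ m ih =>
      rw [Function.iterate_succ_apply']
      exact orbit_mem_symm ih
end G

end SE5aux

open scoped Topology ENNReal in
theorem stmt5 {Ω : Type*} [MeasurableSpace Ω] (μ : MeasureTheory.Measure Ω)
    [MeasureTheory.IsProbabilityMeasure μ]
    (θ : Ω ≃ᵐ Ω) (hergo : Ergodic (⇑θ) μ)
    (σ τ : Ω → ℝ) (hσint : MeasureTheory.Integrable σ μ) (hτint : MeasureTheory.Integrable τ μ)
    (hσ0 : ∀ᵐ ω ∂μ, 0 ≤ σ ω) (hτ0 : ∀ᵐ ω ∂μ, 0 < τ ω)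
    (p : ℕ) (hp : 1 ≤ p) :
    (∃ Y : Ω → Fin p → ℝ, Measurable Y ∧ (∀ᵐ ω ∂μ, OSorted (Y ω)) ∧
      ∀ᵐ ω ∂μ, Y (θ ω) = Psi p (σ ω) (τ ω) (Y ω)) ∧
    (∀ Y : Ω → Fin p → ℝ, Measurable Y → (∀ᵐ ω ∂μ, OSorted (Y ω)) →
      (∀ᵐ ω ∂μ, Y (θ ω) = Psi p (σ ω) (τ ω) (Y ω)) →
      (∀ᵐ ω ∂μ, Y ω ⟨p - 1, by omega⟩ = Zfam (⇑θ.symm) σ τ 1 ω) ∧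
      (∀ᵐ ω ∂μ, ∀ i : Fin p, Y ω i ≤ Zfam (⇑θ.symm) σ τ (p - (i : ℕ)) ω)) := by
  classical
  have hp0 : 0 < p := hp
  set f := ⇑θ.symm with hfdef
  -- measurable modifications
  set σ' : Ω → ℝ := hσint.1.mk σ with hσ'def
  set τ' : Ω → ℝ := hτint.1.mk τ with hτ'def
  have hσm : Measurable σ' := hσint.1.stronglyMeasurable_mk.measurable
  have hτm : Measurable τ' := hτint.1.stronglyMeasurable_mk.measurable
  have hσae : σ =ᵐ[μ] σ' := hσint.1.ae_eq_mk
  have hτae : τ =ᵐ[μ] τ' := hτint.1.ae_eq_mk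
  have hσint' : Integrable σ' μ := hσint.congr hσae
  have hτint' : Integrable τ' μ := hτint.congr hτae
  have hτ0' : ∀ᵐ ω ∂μ, 0 < τ' ω := by
    filter_upwards [hτ0, hτae] with ω h1 h2
    rw [← h2]; exact h1
  have hZB := ae_ZBdd hσm hτm hergo hσint' hτint' hτ0'
  have hTT := ae_tendsto_Tsum hσm hτm hergo hσint' hτint' hτ0'
  set P0 : Ω → Prop := fun ω => σ ω = σ' ω ∧ τ ω = τ' ω ∧ 0 ≤ σ ω ∧ 0 < τ ω ∧
      ZBdd f σ' τ' ω ∧ Tendsto (fun k => Tsum f τ' k ω) atTop atTop with hP0def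
  have hP0 : ∀ᵐ ω ∂μ, P0 ω := by
    filter_upwards [hσae, hτae, hσ0, hτ0, hZB, hTT] with ω a b c d e g
    exact ⟨a, b, c, d, e, g⟩
  -- facts derivable from an orbit of P0-points
  set G : Ω → Prop := fun ω => ∀ n : ℕ, P0 ((⇑θ)^[n] ω) ∧ P0 (f^[n] ω) with hGdef
  have hGae : ∀ᵐ ω ∂μ, G ω := ae_iterate hergo hP0
  have hGP : ∀ ω, G ω → P0 ω := fun ω h => by simpa using (h 0).1
  have hGθ : ∀ ω, G ω → G (θ ω) := fun ω h => orbit_mem_theta h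
  have hGf : ∀ ω, G ω → G (f ω) := fun ω h => orbit_mem_symm h
  have hGfi : ∀ ω, G ω → ∀ m : ℕ, G (f^[m] ω) := fun ω h m => orbit_mem_symm_iter h m
  have hagree : ∀ ω, G ω → ∀ i : ℕ, σ (f^[i] ω) = σ' (f^[i] ω) ∧ τ (f^[i] ω) = τ' (f^[i] ω) :=
    fun ω h i => ⟨((h i).2).1, ((h i).2).2.1⟩
  have hτpos : ∀ ω, G ω → ∀ i : ℕ, 0 < τ (f^[i] ω) := fun ω h i => ((h i).2).2.2.2.1
  have hσnn : ∀ ω, G ω → ∀ i : ℕ, 0 ≤ σ (f^[i] ω) := fun ω h i => ((h i).2).2.2.1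
  have hτpos' : ∀ ω, G ω → ∀ i : ℕ, 0 < τ' (f^[i] ω) := fun ω h i => by
    rw [← (hagree ω h i).2]; exact hτpos ω h i
  have hZB' : ∀ ω, G ω → ZBdd f σ' τ' ω := fun ω h => (hGP ω h).2.2.2.2.1
  have hZBu : ∀ ω, G ω → ZBdd f σ τ ω := fun ω h =>
    (ZBdd_congr (hagree ω h)).mpr (hZB' ω h)
  have hTsum_eq : ∀ ω, G ω → ∀ k, Tsum f τ k ω = Tsum f τ' k ω := fun ω h k =>
    Finset.sum_congr rfl fun i _ => (hagree ω h i).2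
  have hTendu : ∀ ω, G ω → Tendsto (fun k => Tsum f τ k ω) atTop atTop := fun ω h => by
    have := (hGP ω h).2.2.2.2.2
    exact this.congr fun k => (hTsum_eq ω h k).symm
  have hZfam_eq : ∀ ω, G ω → ∀ ℓ, Zfam f σ τ ℓ ω = Zfam f σ' τ' ℓ ω := fun ω h ℓ =>
    Zfam_congr (hagree ω h) ℓ
  -- the candidate solution
  have htnd : ∀ ω, G ω → ∀ j : Fin p,
      Tendsto (fun n => Xseq f p σ' τ' n ω j) atTop (𝓝 (Yc θ p σ' τ' ω j)) := by
    intro ω h j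
    exact Yc_tendsto (C := Zfam f σ' τ' 1 ω)
      (fun n => Xseq_le hp0 n ω (fun i => (hτpos' ω h i).le) (hZB' ω h) j)
  constructor
  · refine ⟨Yc θ p σ' τ', Yc_meas hσm hτm, ?_, ?_⟩
    · filter_upwards [hGae] with ω h
      constructor
      · intro j
        exact ge_of_tendsto (htnd ω h j)
          (Filter.Eventually.of_forall fun n => (Xseq_osorted n ω).1 j)
      · intro i j hij
        exact le_of_tendsto_of_tendsto' (htnd ω h i) (htnd ω h j)
          (fun n => (Xseq_osorted n ω).2 hij)
    · filter_upwards [hGae] with ω h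
      have hθG : G (θ ω) := hGθ ω h
      have hfθ : f (θ ω) = ω := θ.symm_apply_apply ω
      funext j
      have h1 : Tendsto (fun n => Xseq f p σ' τ' (n + 1) (θ ω) j) atTop
          (𝓝 (Yc θ p σ' τ' (θ ω) j)) :=
        (htnd (θ ω) hθG j).comp (tendsto_add_atTop_nat 1)
      have h2 : ∀ n : ℕ, Xseq f p σ' τ' (n + 1) (θ ω) j
          = Psi p (σ' ω) (τ' ω) (Xseq f p σ' τ' n ω) j := by
        intro n
        rw [Xseq_succ, hfθ]
      rw [funext h2] at h1
      have h3 : Tendsto (fun n => Psi p (σ' ω) (τ' ω) (Xseq f p σ' τ' n ω) j) atTop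
          (𝓝 (Psi p (σ' ω) (τ' ω) (Yc θ p σ' τ' ω) j)) :=
        Psi_tendsto (fun i => htnd ω h i) j
      have h4 := tendsto_nhds_unique h1 h3
      rw [h4, (hGP ω h).1, (hGP ω h).2.1]
  · intro Y hYmeas hYsort hYfix
    have hYj : Measurable fun ω => Y ω ⟨p - 1, by omega⟩ :=
      (measurable_pi_apply _).comp hYmeas
    have hcons : Conservative f μ :=
      (MeasurePreserving.symm θ hergo.toMeasurePreserving).conservative
    have hRec : ∀ᵐ ω ∂μ, ∃ K : ℕ, ∃ᶠ n in atTop, Y (f^[n] ω) ⟨p - 1, by omega⟩ ≤ (K : ℝ) := by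
      have hA : ∀ K : ℕ, ∀ᵐ ω ∂μ, ω ∈ {ω' | Y ω' ⟨p - 1, by omega⟩ ≤ (K : ℝ)} →
          ∃ᶠ n in atTop, f^[n] ω ∈ {ω' | Y ω' ⟨p - 1, by omega⟩ ≤ (K : ℝ)} := fun K =>
        hcons.ae_mem_imp_frequently_image_mem
          (measurableSet_le hYj measurable_const).nullMeasurableSet
      filter_upwards [ae_all_iff.mpr hA] with ω hω
      obtain ⟨K, hK⟩ := exists_nat_ge (Y ω ⟨p - 1, by omega⟩)
      exact ⟨K, hω K hK⟩
    set Q : Ω → Prop := fun ω => P0 ω ∧ ((OSorted (Y ω) ∧ Y (θ ω) = Psi p (σ ω) (τ ω) (Y ω)) ∧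
        ∃ K : ℕ, ∃ᶠ n in atTop, Y (f^[n] ω) ⟨p - 1, by omega⟩ ≤ (K : ℝ)) with hQdef
    have hQae : ∀ᵐ ω ∂μ, Q ω := hP0.and ((hYsort.and hYfix).and hRec)
    set G2 : Ω → Prop := fun ω => ∀ n : ℕ, Q ((⇑θ)^[n] ω) ∧ Q (f^[n] ω) with hG2def
    have hG2ae : ∀ᵐ ω ∂μ, G2 ω := ae_iterate hergo hQae
    have hG2G : ∀ ω, G2 ω → G ω := fun ω h n => ⟨(h n).1.1, (h n).2.1⟩
    have hG2f : ∀ ω, G2 ω → G2 (f ω) := fun ω h => orbit_mem_symm h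
    have hG2fi : ∀ ω, G2 ω → ∀ m : ℕ, G2 (f^[m] ω) := fun ω h m => orbit_mem_symm_iter h m
    have hG2Q : ∀ ω, G2 ω → Q ω := fun ω h => by simpa using (h 0).1
    have hYnn : ∀ ω, G2 ω → ∀ j, 0 ≤ Y ω j := fun ω h j => (hG2Q ω h).2.1.1.1 j
    have hYeq : ∀ ω, G2 ω → Y ω = Psi p (σ (f ω)) (τ (f ω)) (Y (f ω)) := by
      intro ω h
      have hRf := (hG2Q (f ω) (hG2f ω h)).2.1.2
      rwa [θ.apply_symm_apply] at hRf
    have hYlast : ∀ ω, G2 ω → Y ω ⟨p - 1, by omega⟩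
        = max (pos (Y (f ω) ⟨p - 1, by omega⟩ - τ (f ω))) (pos (σ (f ω) - τ (f ω))) := by
      intro ω h
      have h1 := congrFun (hYeq ω h) ⟨p - 1, by omega⟩
      have h2 := Psi_last (a := σ (f ω)) (b := τ (f ω)) hp0 (Y (f ω))
      exact (h1.trans h2).trans (pos_sub_max _ _ _)
    have hZt1 : ∀ ω : Ω, Zterm f σ τ 1 ω = σ (f ω) - τ (f ω) := by
      intro ω; simp [Zterm]
    have hTs1 : ∀ ω : Ω, Tsum f τ 1 ω = τ (f ω) := by
      intro ω; simp [Tsum]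
    have hlow : ∀ k : ℕ, ∀ ω, G2 ω → Zterm f σ τ (k + 1) ω ≤ Y ω ⟨p - 1, by omega⟩ := by
      intro k
      induction k with
      | zero =>
          intro ω h
          rw [hYlast ω h, show (0 : ℕ) + 1 = 1 from rfl, hZt1]
          exact le_trans (le_pos _) (le_max_right _ _)
      | succ k ih =>
          intro ω h
          rw [Zterm_succ, hYlast ω h]
          refine le_trans ?_ (le_max_left _ _)
          refine le_trans ?_ (le_pos _)
          exact sub_le_sub_right (ih (f ω) (hG2f ω h)) _
    have hZleY : ∀ ω, G2 ω → Zfam f σ τ 1 ω ≤ Y ω ⟨p - 1, by omega⟩ := by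
      intro ω h
      refine Zfam_le (fun k hk => ?_) (hYnn ω h _)
      obtain ⟨m, rfl⟩ : ∃ m, k = m + 1 := ⟨k - 1, by omega⟩
      exact hlow m ω h
    have hup : ∀ n : ℕ, ∀ ω, G2 ω → Y ω ⟨p - 1, by omega⟩
        ≤ max (pos (Y (f^[n + 1] ω) ⟨p - 1, by omega⟩ - Tsum f τ (n + 1) ω))
            (Zfam f σ τ 1 ω) := by
      intro n
      induction n with
      | zero =>
          intro ω h
          rw [hYlast ω h]
          apply max_le
          · refine le_max_of_le_left (le_of_eq ?_)
            rw [show (0 : ℕ) + 1 = 1 from rfl, Function.iterate_one, hTs1]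
          · refine le_max_of_le_right ?_
            rw [← hZt1]
            exact pos_Zterm_le_Zfam (hZBu ω (hG2G ω h)) le_rfl
      | succ n ih =>
          intro ω h
          refine le_trans (ih ω h) ?_
          have hω'G : G2 (f^[n + 1] ω) := hG2fi ω h (n + 1)
          have hTn : 0 ≤ Tsum f τ (n + 1) ω :=
            Tsum_nonneg (fun i => (hτpos ω (hG2G ω h) i).le) _
          have e1 : f (f^[n + 1] ω) = f^[n + 2] ω :=
            (Function.iterate_succ_apply' f (n + 1) ω).symm
          have key : pos (Y (f^[n + 1] ω) ⟨p - 1, by omega⟩ - Tsum f τ (n + 1) ω)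
              ≤ max (pos (Y (f^[n + 2] ω) ⟨p - 1, by omega⟩ - Tsum f τ (n + 2) ω))
                  (Zfam f σ τ 1 ω) := by
            rw [hYlast (f^[n + 1] ω) hω'G]
            have c1 : pos (max (pos (Y (f (f^[n + 1] ω)) ⟨p - 1, by omega⟩ - τ (f (f^[n + 1] ω))))
                  (pos (σ (f (f^[n + 1] ω)) - τ (f (f^[n + 1] ω)))) - Tsum f τ (n + 1) ω)
                = pos (pos (max (Y (f (f^[n + 1] ω)) ⟨p - 1, by omega⟩ - τ (f (f^[n + 1] ω)))
                    (σ (f (f^[n + 1] ω)) - τ (f (f^[n + 1] ω)))) - Tsum f τ (n + 1) ω) := by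
              rw [pos_max]
            rw [c1, pos_pos_sub hTn, pos_sub_max]
            apply max_le
            · refine le_max_of_le_left (le_of_eq ?_)
              have e2 : Y (f (f^[n + 1] ω)) ⟨p - 1, by omega⟩ - τ (f (f^[n + 1] ω))
                    - Tsum f τ (n + 1) ω
                  = Y (f^[n + 2] ω) ⟨p - 1, by omega⟩ - Tsum f τ (n + 2) ω := by
                rw [e1, show n + 2 = n + 1 + 1 from rfl, Tsum_top (n + 1) ω]
                ring
              rw [e2]
            · refine le_max_of_le_right ?_
              have e3 : σ (f (f^[n + 1] ω)) - τ (f (f^[n + 1] ω)) - Tsum f τ (n + 1) ω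
                  = Zterm f σ τ (n + 2) ω := by
                rw [e1, show n + 2 = n + 1 + 1 from rfl, Zterm_eq, Tsum_top (n + 1) ω]
                ring
              rw [e3]
              exact pos_Zterm_le_Zfam (hZBu ω (hG2G ω h)) (by omega)
          exact max_le key (le_max_right _ _)
    have hYeqZ : ∀ ω, G2 ω → Y ω ⟨p - 1, by omega⟩ = Zfam f σ τ 1 ω := by
      intro ω h
      refine le_antisymm ?_ (hZleY ω h)
      obtain ⟨K, hK⟩ := (hG2Q ω h).2.2
      have hev : ∀ᶠ n in atTop, (K : ℝ) ≤ Tsum f τ n ω ∧ 1 ≤ n :=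
        ((hTendu ω (hG2G ω h)).eventually_ge_atTop _).and (eventually_ge_atTop 1)
      obtain ⟨n, hn1, hn2, hn3⟩ := (hK.and_eventually hev).exists
      obtain ⟨m, rfl⟩ : ∃ m, n = m + 1 := ⟨n - 1, by omega⟩
      have hu := hup m ω h
      have hz : pos (Y (f^[m + 1] ω) ⟨p - 1, by omega⟩ - Tsum f τ (m + 1) ω) = 0 :=
        pos_of_nonpos (by linarith)
      rw [hz, max_eq_right (Zfam_nonneg _ _)] at hu
      exact hu
    have hcoord : ∀ m : ℕ, m ≤ p - 1 → ∀ ω, G2 ω → ∀ hlt : p - 1 - m < p,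
        Y ω ⟨p - 1 - m, hlt⟩ ≤ Zfam f σ τ (m + 1) ω := by
      intro m
      induction m with
      | zero => exact fun _ ω h _ => le_of_eq (hYeqZ ω h)
      | succ m ih =>
          intro hm ω h hlt
          have hjlt : (p - 1 - (m + 1)) + 1 < p := by omega
          have h1 := congrFun (hYeq ω h) ⟨p - 1 - (m + 1), hlt⟩
          have h2 := Psi_interior (a := σ (f ω)) (b := τ (f ω)) (Y (f ω)) (p - 1 - (m + 1)) hjlt
          have h3 : Y ω ⟨p - 1 - (m + 1), hlt⟩
              ≤ pos (Y (f ω) ⟨p - 1 - (m + 1) + 1, hjlt⟩ - τ (f ω)) := by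
            rw [h1.trans h2]
            exact pos_mono (sub_le_sub_right (min_le_right _ _) _)
          have h4 : Y (f ω) ⟨p - 1 - (m + 1) + 1, hjlt⟩ ≤ Zfam f σ τ (m + 1) (f ω) := by
            refine le_trans (le_of_eq (congrArg (Y (f ω))
              (Fin.ext (show p - 1 - (m + 1) + 1 = p - 1 - m by omega))))
              (ih (by omega) (f ω) (hG2f ω h) (by omega))
          have h5 := pos_mono (sub_le_sub_right h4 (τ (f ω)))
          have h6 : pos (Zfam f σ τ (m + 1) (f ω) - τ (f ω)) = Zfam f σ τ (m + 2) ω :=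
            (Zfam_succ (hZBu ω (hG2G ω h)) (hτpos ω (hG2G ω h) 1).le (m + 1)).symm
          exact (h3.trans h5).trans (le_of_eq h6)
    constructor
    · filter_upwards [hG2ae] with ω h
      exact hYeqZ ω h
    · filter_upwards [hG2ae] with ω h
      intro i
      have hilt := i.isLt
      have hc := hcoord (p - 1 - (i : ℕ)) (by omega) ω h (by omega)
      have e4 : Y ω i = Y ω ⟨p - 1 - (p - 1 - (i : ℕ)), by omega⟩ :=
        congrArg (Y ω) (Fin.ext (show (i : ℕ) = p - 1 - (p - 1 - (i : ℕ)) by omega))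
      have e5 : p - 1 - (i : ℕ) + 1 = p - (i : ℕ) := by omega
      rw [e4]
      rw [e5] at hc
      exact hc
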